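/- Let n ≥ 1 and work in E = EuclideanSpace ℝ (Fin n). Let f, h : E → ℝ be differentiable with h convex, and let g : E → EReal be proper, lower semicontinuous and convex. Let ρ_f, ρ_h > 0, α ≥ α_min > 0, w ∈ [0, w̄] with w̄ ≥ 0. Let x⁻, x ∈ E, set y = x + w•(x − x⁻), and suppose x⁺ satisfies g(x⁺) finite and minimizes u ↦ g(u) + ⟪∇f(y), u − y⟫ + (1/α)·D_h(u, y) over E. Assume ‖∇f(x⁺) − ∇f(y)‖ ≤ ρ_f·‖x⁺ − y‖ and ‖∇h(x⁺) − ∇h(y)‖ ≤ ρ_h·‖x⁺ − y‖. Then there exists u ∈ ∂g(x⁺) such that ‖∇f(x⁺) + u‖ ≤ (ρ_f + ρ_h/α_min)·(‖x⁺ − x‖ + w̄·‖x − x⁻‖). -/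

import Mathlib

open RealInnerProductSpace

/-- The Bregman distance `D_h(x, y) = h(x) − h(y) − ⟪∇h(y), x − y⟫`. -/
noncomputable def bregman {n : ℕ} (h : EuclideanSpace ℝ (Fin n) → ℝ)
    (x y : EuclideanSpace ℝ (Fin n)) : ℝ :=
  h x - h y - ⟪gradient h y, x - y⟫

set_option maxHeartbeats 1000000 in
/-- Bound on the subgradient after one extrapolated Bregman proximal step:
there exists `u ∈ ∂g(x⁺)` with `‖∇f(x⁺) + u‖ ≤ (ρ_f + ρ_h/α_min)(‖x⁺ − x‖ + w̄‖x − x⁻‖)`. -/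
theorem aabpg_subgradient_bound
    (n : ℕ) (hn : 1 ≤ n)
    (f h : EuclideanSpace ℝ (Fin n) → ℝ)
    (hf : Differentiable ℝ f) (hh : Differentiable ℝ h)
    (hconv : ConvexOn ℝ Set.univ h)
    (g : EuclideanSpace ℝ (Fin n) → EReal)
    (hg_bot : ∀ x, g x ≠ ⊥) (hg_proper : ∃ x, g x ≠ ⊤)
    (hg_lsc : LowerSemicontinuous g)
    (hg_convex : ∀ x y : EuclideanSpace ℝ (Fin n), ∀ t : ℝ, 0 ≤ t → t ≤ 1 →
      g (t • x + (1 - t) • y) ≤ (t : EReal) * g x + ((1 - t : ℝ) : EReal) * g y)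
    (ρf ρh α αmin w wbar : ℝ)
    (hρf : 0 < ρf) (hρh : 0 < ρh)
    (hαmin : 0 < αmin) (hααmin : αmin ≤ α)
    (hwbar : 0 ≤ wbar) (hw : w ∈ Set.Icc 0 wbar)
    (xm x xp y : EuclideanSpace ℝ (Fin n))
    (hy : y = x + w • (x - xm))
    (hfin : g xp ≠ ⊤)
    (hmin : ∀ u : EuclideanSpace ℝ (Fin n),
      g xp + ((⟪gradient f y, xp - y⟫ + (1 / α) * bregman h xp y : ℝ) : EReal) ≤
        g u + ((⟪gradient f y, u - y⟫ + (1 / α) * bregman h u y : ℝ) : EReal))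
    (hlipf : ‖gradient f xp - gradient f y‖ ≤ ρf * ‖xp - y‖)
    (hliph : ‖gradient h xp - gradient h y‖ ≤ ρh * ‖xp - y‖) :
    ∃ u : EuclideanSpace ℝ (Fin n),
      (∀ v : EuclideanSpace ℝ (Fin n), g xp + ((⟪u, v - xp⟫ : ℝ) : EReal) ≤ g v) ∧
      ‖gradient f xp + u‖ ≤ (ρf + ρh / αmin) * (‖xp - x‖ + wbar * ‖x - xm‖) := by
  have hα : 0 < α := lt_of_lt_of_le hαmin hααmin
  set gf := gradient f y with hgf
  set gh := gradient h y with hgh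
  set u0 : EuclideanSpace ℝ (Fin n) := -(gf + (1/α) • (gradient h xp - gh)) with hu0
  refine ⟨u0, ?_, ?_⟩
  · intro v
    by_cases hv : g v = ⊤
    · rw [hv]; exact le_top
    set d := v - xp with hd
    set A := (g xp).toReal with hA
    set B := (g v).toReal with hB
    have hgxp : g xp = (A : EReal) := (EReal.coe_toReal hfin (hg_bot xp)).symm
    have hgv : g v = (B : EReal) := (EReal.coe_toReal hv (hg_bot v)).symm
    set L : ℝ → ℝ := fun t => ⟪gf, (xp + t • d) - y⟫ + (1/α) * bregman h (xp + t • d) y with hLdef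
    have hline : ∀ t : ℝ, HasDerivAt (fun s : ℝ => xp + s • d) d t := by
      intro t
      simpa using ((hasDerivAt_id t).smul_const d).const_add xp
    have hx0 : xp + (0:ℝ) • d = xp := by simp
    have hhd : HasDerivAt (fun t : ℝ => h (xp + t • d)) ⟪gradient h xp, d⟫ 0 := by
      have hF : HasFDerivAt h
          (InnerProductSpace.toDual ℝ (EuclideanSpace ℝ (Fin n)) (gradient h xp))
          (xp + (0:ℝ) • d) := hx0.symm ▸ (hh xp).hasGradientAt.hasFDerivAt
      have := hF.comp_hasDerivAt 0 (hline 0)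
      simpa [InnerProductSpace.toDual_apply_apply, Function.comp_def] using this
    set s : ℝ := ⟪gf, d⟫ + (1/α) * (⟪gradient h xp, d⟫ - ⟪gh, d⟫) with hs
    have hLder : HasDerivAt L s 0 := by
      have h1 : HasDerivAt (fun t : ℝ => ⟪gf, (xp + t • d) - y⟫) ⟪gf, d⟫ 0 := by
        have he : (fun t : ℝ => ⟪gf, (xp + t • d) - y⟫)
            = fun t => ⟪gf, xp - y⟫ + t * ⟪gf, d⟫ := by
          funext t
          rw [add_sub_right_comm, inner_add_right, real_inner_smul_right]
        rw [he]
        simpa using ((hasDerivAt_id (0:ℝ)).mul_const ⟪gf, d⟫).const_add ⟪gf, xp - y⟫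
      have h2 : HasDerivAt (fun t : ℝ => (1/α) * bregman h (xp + t • d) y)
          ((1/α) * (⟪gradient h xp, d⟫ - ⟪gh, d⟫)) 0 := by
        have hinner : HasDerivAt (fun t : ℝ => ⟪gh, (xp + t • d) - y⟫) ⟪gh, d⟫ 0 := by
          have he : (fun t : ℝ => ⟪gh, (xp + t • d) - y⟫)
              = fun t => ⟪gh, xp - y⟫ + t * ⟪gh, d⟫ := by
            funext t
            rw [add_sub_right_comm, inner_add_right, real_inner_smul_right]
          rw [he]
          simpa using ((hasDerivAt_id (0:ℝ)).mul_const ⟪gh, d⟫).const_add ⟪gh, xp - y⟫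
        have hb : HasDerivAt (fun t : ℝ => bregman h (xp + t • d) y)
            (⟪gradient h xp, d⟫ - ⟪gh, d⟫) 0 := by
          have := (hhd.sub_const (h y)).sub hinner
          exact this
        exact hb.const_mul (1/α)
      exact h1.add h2
    have hkey : ∀ t : ℝ, t ∈ Set.Ioc (0:ℝ) 1 → A - B ≤ slope L 0 t := by
      intro t ht
      obtain ⟨ht0, ht1⟩ := ht
      have hz : xp + t • d = t • v + (1 - t) • xp := by rw [hd]; module
      have hcv := hg_convex v xp t ht0.le ht1
      rw [← hz, hgxp, hgv] at hcv
      have hmin' := hmin (xp + t • d)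
      rw [hgxp] at hmin'
      have hLt : (⟪gf, (xp + t • d) - y⟫ + (1 / α) * bregman h (xp + t • d) y) = L t := rfl
      have hL0 : (⟪gf, xp - y⟫ + (1 / α) * bregman h xp y) = L 0 := by
        simp only [hLdef, hx0]
      rw [hLt, hL0] at hmin'
      have hchain : ((A + L 0 : ℝ) : EReal) ≤ ((t * B + (1 - t) * A + L t : ℝ) : EReal) := by
        calc ((A + L 0 : ℝ) : EReal) = (A : EReal) + ((L 0 : ℝ) : EReal) := by
              rw [EReal.coe_add]
          _ ≤ g (xp + t • d) + ((L t : ℝ) : EReal) := hmin'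
          _ ≤ ((t : EReal) * (B : EReal) + ((1 - t : ℝ) : EReal) * (A : EReal))
              + ((L t : ℝ) : EReal) := add_le_add_left hcv _
          _ = ((t * B + (1 - t) * A + L t : ℝ) : EReal) := by
              rw [← EReal.coe_mul, ← EReal.coe_mul, ← EReal.coe_add, ← EReal.coe_add]
      have hr : A + L 0 ≤ t * B + (1 - t) * A + L t := EReal.coe_le_coe_iff.mp hchain
      rw [slope_def_field, sub_zero, le_div_iff₀ ht0]
      nlinarith
    have hslope : Filter.Tendsto (slope L 0) (nhdsWithin 0 (Set.Ioi 0)) (nhds s) :=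
      (hasDerivAt_iff_tendsto_slope.mp hLder).mono_left
        (nhdsWithin_mono _ (fun t ht => ne_of_gt ht))
    have hev : ∀ᶠ t in nhdsWithin (0:ℝ) (Set.Ioi 0), A - B ≤ slope L 0 t := by
      filter_upwards [Ioc_mem_nhdsGT_of_mem (by constructor <;> norm_num :
        (0:ℝ) ∈ Set.Ico (0:ℝ) 1)] with t ht using hkey t ht
    have hAB : A - B ≤ s := ge_of_tendsto hslope hev
    have hsu : ⟪u0, d⟫ = -s := by
      rw [hu0, hs]
      rw [inner_neg_left, inner_add_left, real_inner_smul_left, inner_sub_left]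
    have : A + ⟪u0, v - xp⟫ ≤ B := by
      rw [← hd, hsu]; linarith
    rw [hgxp, hgv, ← EReal.coe_add]
    exact_mod_cast this
  · have hxy : xp - y = (xp - x) - w • (x - xm) := by rw [hy]; module
    have hny : ‖xp - y‖ ≤ ‖xp - x‖ + wbar * ‖x - xm‖ := by
      rw [hxy]
      calc ‖(xp - x) - w • (x - xm)‖ ≤ ‖xp - x‖ + ‖w • (x - xm)‖ := norm_sub_le _ _
        _ = ‖xp - x‖ + w * ‖x - xm‖ := by rw [norm_smul, Real.norm_eq_abs, abs_of_nonneg hw.1]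
        _ ≤ ‖xp - x‖ + wbar * ‖x - xm‖ := by
            have := hw.2; nlinarith [norm_nonneg (x - xm)]
    have huv : gradient f xp + u0 = (gradient f xp - gf) - (1/α) • (gradient h xp - gh) := by
      rw [hu0]; module
    have hα1 : (0:ℝ) < 1/α := by positivity
    calc ‖gradient f xp + u0‖
        = ‖(gradient f xp - gf) - (1/α) • (gradient h xp - gh)‖ := by rw [huv]
      _ ≤ ‖gradient f xp - gf‖ + ‖(1/α) • (gradient h xp - gh)‖ := norm_sub_le _ _
      _ = ‖gradient f xp - gf‖ + (1/α) * ‖gradient h xp - gh‖ := by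
          rw [norm_smul, Real.norm_eq_abs, abs_of_pos hα1]
      _ ≤ ρf * ‖xp - y‖ + (1/α) * (ρh * ‖xp - y‖) := by gcongr
      _ ≤ (ρf + ρh / αmin) * ‖xp - y‖ := by
          have hdd : ρh / α ≤ ρh / αmin := div_le_div_of_nonneg_left hρh.le hαmin hααmin
          have h3 : ρh / α * ‖xp - y‖ ≤ ρh / αmin * ‖xp - y‖ :=
            mul_le_mul_of_nonneg_right hdd (norm_nonneg _)
          have h4 : 1/α * (ρh * ‖xp - y‖) = ρh / α * ‖xp - y‖ := by ring
          have h5 : (ρf + ρh / αmin) * ‖xp - y‖ = ρf * ‖xp - y‖ + ρh / αmin * ‖xp - y‖ := by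
            ring
          linarith
      _ ≤ (ρf + ρh / αmin) * (‖xp - x‖ + wbar * ‖x - xm‖) :=
          mul_le_mul_of_nonneg_left hny (by positivity)
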